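/- Let (R,𝔪) be a commutative noetherian local ring and M a finitely generated R-module with depth_R M = 0. Then for every f in the center of End_R(M) there exists u ∈ R such that the image of f − u·id_M is contained in 𝔪M. -/

import Mathlib

open CategoryTheory

/-- The depth of a module `M` over a noetherian local ring `A`:
`inf { n | Ext^n_A(A/𝔪, M) ≠ 0 }`, with the convention that the depth of the
zero module is `∞` (the infimum of the empty set). -/
noncomputable def moduleDepth (A : Type) [CommRing A] [IsLocalRing A]
    (M : Type) [AddCommGroup M] [Module A M] : ℕ∞ :=
  sInf {d : ℕ∞ | ∃ n : ℕ, d = n ∧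
    Nontrivial (((Ext A (ModuleCat A) n).obj
      (Opposite.op (ModuleCat.of A (IsLocalRing.ResidueField A)))).obj (ModuleCat.of A M))}

open IsLocalRing in
/-- From nontriviality of `Ext^0(k, M) = Hom(k, M)` we get a nonzero map `k →ₗ[R] M`. -/
lemma center_end_aux_ext_zero (R : Type) [CommRing R] [IsLocalRing R]
    (M : Type) [AddCommGroup M] [Module R M]
    (h : Nontrivial (((Ext R (ModuleCat R) 0).obj
      (Opposite.op (ModuleCat.of R (ResidueField R)))).obj (ModuleCat.of R M))) :
    ∃ φ : ResidueField R →ₗ[R] M, φ ≠ 0 := by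
  set C := ModuleCat R
  set Y : C := ModuleCat.of R M
  set K : C := ModuleCat.of R (ResidueField R)
  letI : Limits.PreservesFiniteLimits ((linearYoneda R C).obj Y) := by
    have : Limits.PreservesLimits ((linearYoneda R C).obj Y ⋙ forget (ModuleCat R)) := by
      show Limits.PreservesLimits (yoneda.obj Y); infer_instance
    exact ⟨fun _ _ _ => CategoryTheory.Limits.preservesLimitsOfShape_of_reflects_of_preserves
      _ (forget (ModuleCat R))⟩
  letI : Limits.PreservesFiniteColimits ((linearYoneda R C).obj Y).rightOp :=
    CategoryTheory.Limits.preservesFiniteColimits_rightOp _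
  let e := (((linearYoneda R C).obj Y).rightOp.leftDerivedZeroIsoSelf.app K).unop
  have h2 : Nontrivial (K ⟶ Y) := by
    have e2 : (((Ext R (ModuleCat R) 0).obj
      (Opposite.op (ModuleCat.of R (ResidueField R)))).obj (ModuleCat.of R M)) ≅
        ModuleCat.of R (K ⟶ Y) := e.symm
    exact Equiv.nontrivial (e2.toLinearEquiv.toEquiv.symm : (K ⟶ Y) ≃ _)
  obtain ⟨a, b, hab⟩ := h2
  exact ⟨(a - b).hom, fun h => sub_ne_zero.mpr hab (ModuleCat.hom_ext (by simpa using h))⟩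

open IsLocalRing in
/-- The key algebraic step: if the socle of `M` is nonzero, then every central
endomorphism of `M` is congruent to a scalar modulo `𝔪M`. -/
lemma center_end_aux_main (R : Type) [CommRing R] [IsLocalRing R]
    (M : Type) [AddCommGroup M] [Module R M] [Module.Finite R M]
    (x : M) (hx0 : x ≠ 0) (hxm : ∀ a ∈ maximalIdeal R, a • x = 0) :
    ∀ f ∈ Subalgebra.center R (Module.End R M),
      ∃ u : R, LinearMap.range (f - u • (LinearMap.id : Module.End R M)) ≤
        (IsLocalRing.maximalIdeal R) • (⊤ : Submodule R M) := by
  intro f hf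
  rw [Subalgebra.mem_center_iff] at hf
  set I := maximalIdeal R with hI
  set k := ResidueField R with hk
  set N := M ⧸ (I • ⊤ : Submodule R M) with hN
  letI : Module k N := (inferInstance : Module (R ⧸ I) N)
  have hsmN : ∀ (r : R) (n : N), (residue R r) • n = r • n := by
    intro r n
    show (Ideal.Quotient.mk I r) • n = r • n
    obtain ⟨m, rfl⟩ := Submodule.Quotient.mk_surjective _ n
    rw [Module.Quotient.mk_smul_mk, Submodule.Quotient.mk_smul]
  have hsmk : ∀ (r : R) (c : k), r • c = residue R r * c := by
    intro r c
    obtain ⟨s, rfl⟩ := Ideal.Quotient.mk_surjective c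
    show r • (Ideal.Quotient.mk I s) = Ideal.Quotient.mk I (r * s)
    rw [← smul_eq_mul]
    exact (Submodule.Quotient.mk_smul _ r s).symm
  haveI : IsScalarTower R k N := by
    constructor
    intro r c n
    obtain ⟨a, rfl⟩ := residue_surjective c
    rw [hsmk]
    show (residue R (r * a)) • n = _
    rw [hsmN, hsmN, mul_smul]
  haveI : Nontrivial M := ⟨x, 0, hx0⟩
  have hne : (⊤ : Submodule R M) ≠ I • ⊤ :=
    Submodule.top_ne_ideal_smul_of_le_jacobson_annihilator
      (maximalIdeal_le_jacobson _)
  haveI : Nontrivial N :=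
    Submodule.Quotient.nontrivial_iff.mpr (Ne.symm hne)
  have hker : (I : Submodule R R) ≤ LinearMap.ker (LinearMap.toSpanSingleton R M x) := by
    intro a ha
    simpa using hxm a ha
  let ψ : k →ₗ[R] M := Submodule.liftQ (I : Submodule R R)
    (LinearMap.toSpanSingleton R M x) hker
  have hψ : ∀ r : R, ψ (residue R r) = r • x := fun r => rfl
  have hψinj : Function.Injective ψ := by
    intro c c' hcc
    obtain ⟨r, rfl⟩ := residue_surjective c
    obtain ⟨r', rfl⟩ := residue_surjective c'
    by_contra hne'
    have hsub : ¬ (r - r' ∈ I) := fun hmem => hne' (by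
      exact (Ideal.Quotient.mk_eq_mk_iff_sub_mem r r').mpr hmem)
    have hu : IsUnit (r - r') := by
      by_contra hnu
      exact hsub (IsLocalRing.mem_maximalIdeal _ |>.mpr hnu)
    have hz : (r - r') • x = 0 := by
      rw [sub_smul, ← hψ, ← hψ, hcc, sub_self]
    obtain ⟨v, hv⟩ := hu
    apply hx0
    have h9 : v.inv * (r - r') = 1 := by rw [← hv]; exact v.inv_mul
    calc x = (v.inv * (r - r')) • x := by rw [h9, one_smul]
    _ = v.inv • ((r - r') • x) := by rw [mul_smul]
    _ = 0 := by rw [hz, smul_zero]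
  let q : M →ₗ[R] N := Submodule.mkQ _
  have hq : Function.Surjective q := Submodule.Quotient.mk_surjective _
  let b := Module.Basis.ofVectorSpace k N
  haveI : Nonempty (Module.Basis.ofVectorSpaceIndex k N) := b.index_nonempty
  let c : Module.Basis.ofVectorSpaceIndex k N → (M →ₗ[R] k) := fun i =>
    (LinearMap.restrictScalars R (b.coord i)).comp q
  have hcen : ∀ i m, ψ (c i (f m)) = f (ψ (c i m)) := by
    intro i m
    have := LinearMap.congr_fun (hf (ψ ∘ₗ (c i))) m
    simpa [Module.End.mul_apply] using this
  obtain ⟨i₀⟩ := ‹Nonempty (Module.Basis.ofVectorSpaceIndex k N)›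
  obtain ⟨e, he⟩ := hq (b i₀)
  set lam : k := c i₀ (f e) with hlam
  have hfx : f x = ψ lam := by
    have h1 : c i₀ e = 1 := by
      show (b.coord i₀) (q e) = 1
      rw [he, Module.Basis.coord_apply, Module.Basis.repr_self, Finsupp.single_eq_same]
    have h3 := hcen i₀ e
    rw [h1] at h3
    have h2 : ψ 1 = x := by
      have := hψ 1; simpa using this
    rw [h2] at h3
    exact h3.symm
  have hmul : ∀ c' : k, f (ψ c') = ψ (lam * c') := by
    intro c'
    obtain ⟨r, rfl⟩ := residue_surjective c'
    rw [hψ, map_smul, hfx, ← map_smul]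
    congr 1
    rw [hsmk, mul_comm]
  have hcoord : ∀ i m, c i (f m) = lam * c i m := by
    intro i m
    exact hψinj (by rw [hcen, hmul])
  have hqf : ∀ m : M, q (f m) = lam • q m := by
    intro m
    apply b.ext_elem
    intro i
    have h4 : b.repr (q (f m)) i = c i (f m) := by
      show _ = (b.coord i) (q (f m))
      rw [Module.Basis.coord_apply]
    have h5 : b.repr (lam • q m) i = lam * b.repr (q m) i := by
      rw [map_smul, Finsupp.smul_apply, smul_eq_mul]
    rw [h4, h5, hcoord]
    congr 1
  obtain ⟨u, hu⟩ := residue_surjective lam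
  refine ⟨u, ?_⟩
  rintro y ⟨m, rfl⟩
  have h6 : (f - u • (LinearMap.id : Module.End R M)) m = f m - u • m := by
    simp
  rw [h6]
  have h7 : q (f m - u • m) = 0 := by
    rw [map_sub, map_smul, hqf, ← hu, hsmN, sub_self]
  rwa [Submodule.mkQ_apply, Submodule.Quotient.mk_eq_zero] at h7

/-- Let `(R,𝔪)` be a commutative noetherian local ring and `M` a finitely generated
`R`-module with `depth_R M = 0`.  Then for every `f` in the center of `End_R M` there
exists `u ∈ R` with `im (f - u·id) ⊆ 𝔪M`. -/
theorem center_end_depth_zero_approx_scalar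
    (R : Type) [CommRing R] [IsNoetherianRing R] [IsLocalRing R]
    (M : Type) [AddCommGroup M] [Module R M] [Module.Finite R M]
    (hdepth : moduleDepth R M = 0) :
    ∀ f ∈ Subalgebra.center R (Module.End R M),
      ∃ u : R, LinearMap.range (f - u • (LinearMap.id : Module.End R M)) ≤
        (IsLocalRing.maximalIdeal R) • (⊤ : Submodule R M) := by
  classical
  -- Step 1: `Ext^0(k, M)` is nontrivial
  have h0 : Nontrivial (((Ext R (ModuleCat R) 0).obj
      (Opposite.op (ModuleCat.of R (IsLocalRing.ResidueField R)))).obj (ModuleCat.of R M)) := by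
    by_contra hnt
    have h1 : ∀ d ∈ {d : ℕ∞ | ∃ n : ℕ, d = n ∧
        Nontrivial (((Ext R (ModuleCat R) n).obj
          (Opposite.op (ModuleCat.of R (IsLocalRing.ResidueField R)))).obj (ModuleCat.of R M))},
        (1 : ℕ∞) ≤ d := by
      rintro d ⟨n, rfl, h⟩
      have hn : n ≠ 0 := by rintro rfl; exact hnt h
      exact_mod_cast Nat.one_le_iff_ne_zero.mpr hn
    have h2 := le_sInf h1
    rw [show sInf _ = moduleDepth R M from rfl, hdepth] at h2
    exact (by norm_num : ¬ (1:ℕ∞) ≤ (0:ℕ∞)) h2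
  -- Step 2: a nonzero socle element
  obtain ⟨φ, hφ⟩ := center_end_aux_ext_zero R M h0
  have hone : ∀ r : R, r • (1 : IsLocalRing.ResidueField R) = IsLocalRing.residue R r := by
    intro r
    show r • Submodule.Quotient.mk (1:R) = Submodule.Quotient.mk r
    exact ((Submodule.Quotient.mk_smul
      ((IsLocalRing.maximalIdeal R : Submodule R R)) r (1:R)).symm).trans
      (by rw [smul_eq_mul, mul_one])
  have hx0 : φ 1 ≠ 0 := by
    intro hx
    apply hφ
    ext c
    obtain ⟨r, rfl⟩ := Ideal.Quotient.mk_surjective c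
    show φ (IsLocalRing.residue R r) = 0
    rw [← hone, map_smul, hx, smul_zero]
  have hxm : ∀ a ∈ IsLocalRing.maximalIdeal R, a • (φ 1) = 0 := by
    intro a ha
    rw [← map_smul, hone]
    have : IsLocalRing.residue R a = 0 := Ideal.Quotient.eq_zero_iff_mem.mpr ha
    rw [this, map_zero]
  exact center_end_aux_main R M (φ 1) hx0 hxm
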